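/- Let w ∈ ℓ∞(ℤ) be a weight sequence with |w_n| = |w_{-n}| for all n ∈ ℤ, T_w the bilateral weighted shift on complex ℓ₂(ℤ) (T_w e_n = w_n e_{n-1}), and p a polynomial with real coefficients. Then p(T_w) is not ℝ-cyclic: there is no x such that the real-linear span of {p(T_w)^n x : n ≥ 0} is dense in ℓ₂(ℤ). -/

import Mathlib

open Complex Finset
open scoped InnerProductSpace ENNReal

set_option maxHeartbeats 1000000


noncomputable def s18u (w : ℤ → ℂ) (m : ℤ) : ℂ :=
  if w m = 0 then 1 else w m / (‖w m‖ : ℂ)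

noncomputable def s18lam (w : ℤ → ℂ) (n : ℤ) : ℂ :=
  if 0 ≤ n then ∏ k ∈ Finset.range n.toNat, s18u w ((k : ℤ) + 1)
  else (∏ k ∈ Finset.range (-n).toNat, s18u w (-(k : ℤ)))⁻¹

noncomputable def s18nu (w : ℤ → ℂ) (n : ℤ) : ℂ :=
  (starRingEnd ℂ) (s18lam w n) * s18lam w (-1 - n)

lemma s18u_norm (w : ℤ → ℂ) (m : ℤ) : ‖s18u w m‖ = 1 := by
  unfold s18u
  split_ifs with h
  · simp
  · rw [norm_div, Complex.norm_real, Real.norm_eq_abs, _root_.abs_of_nonneg (norm_nonneg _)]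
    exact div_self (norm_ne_zero_iff.mpr h)

lemma s18u_ne (w : ℤ → ℂ) (m : ℤ) : s18u w m ≠ 0 := by
  intro h; have := s18u_norm w m; rw [h] at this; simp at this

lemma s18lam_of_nonpos (w : ℤ → ℂ) {n : ℤ} (hn : n ≤ 0) :
    s18lam w n = (∏ k ∈ Finset.range (-n).toNat, s18u w (-(k : ℤ)))⁻¹ := by
  rcases eq_or_lt_of_le hn with h | h
  · subst h; simp [s18lam]
  · unfold s18lam; rw [if_neg (by omega)]

lemma s18lam_step (w : ℤ → ℂ) (n : ℤ) : s18lam w n = s18lam w (n - 1) * s18u w n := by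
  rcases le_or_gt n 0 with hn | hn
  · rw [s18lam_of_nonpos w hn, s18lam_of_nonpos w (by omega : n - 1 ≤ 0)]
    have h1 : (-(n - 1)).toNat = (-n).toNat + 1 := by omega
    rw [h1, Finset.prod_range_succ]
    have h2 : (-(((-n).toNat : ℤ))) = n := by omega
    rw [h2, mul_inv, inv_mul_cancel_right₀ (s18u_ne w n)]
  · unfold s18lam
    rw [if_pos (by omega), if_pos (by omega)]
    have h1 : n.toNat = (n - 1).toNat + 1 := by omega
    have h2 : (((n - 1).toNat : ℤ) + 1) = n := by omega
    rw [h1, Finset.prod_range_succ, h2]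

lemma s18lam_norm (w : ℤ → ℂ) (n : ℤ) : ‖s18lam w n‖ = 1 := by
  unfold s18lam
  split_ifs with h
  · rw [norm_prod]; exact Finset.prod_eq_one fun k _ => s18u_norm w _
  · rw [norm_inv, norm_prod, Finset.prod_eq_one fun k _ => s18u_norm w _]; norm_num

lemma s18nu_norm (w : ℤ → ℂ) (n : ℤ) : ‖s18nu w n‖ = 1 := by
  unfold s18nu
  rw [norm_mul, RingHomIsometric.norm_map, s18lam_norm, s18lam_norm, one_mul]

lemma s18nu_ne (w : ℤ → ℂ) (n : ℤ) : s18nu w n ≠ 0 := by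
  intro h; have := s18nu_norm w n; rw [h] at this; simp at this

lemma s18nu_symm (w : ℤ → ℂ) (n : ℤ) :
    s18nu w (-1 - n) = (starRingEnd ℂ) (s18nu w n) := by
  unfold s18nu
  rw [show (-1 - (-1 - n) : ℤ) = n by ring, map_mul, Complex.conj_conj, mul_comm]


lemma s18key_u (w : ℤ → ℂ) (hsymm : ∀ n : ℤ, ‖w n‖ = ‖w (-n)‖) (n : ℤ) :
    (starRingEnd ℂ) (s18u w (-n)) * w n = s18u w n * (starRingEnd ℂ) (w (-n)) := by
  by_cases h : w n = 0
  · have h2 : w (-n) = 0 := by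
      have := hsymm n; rw [h] at this; simpa using this.symm
    simp [h, h2]
  · have h2 : w (-n) ≠ 0 := by
      intro h2; have := hsymm n; rw [h2] at this; simp at this; exact h this
    unfold s18u
    rw [if_neg h, if_neg h2, map_div₀, Complex.conj_ofReal, ← hsymm n]
    field_simp

lemma s18key (w : ℤ → ℂ) (hsymm : ∀ n : ℤ, ‖w n‖ = ‖w (-n)‖) (n : ℤ) :
    (starRingEnd ℂ) (s18nu w (n - 1)) * w n
      = (starRingEnd ℂ) (s18nu w n) * (starRingEnd ℂ) (w (-n)) := by
  unfold s18nu
  have h1 := s18lam_step w n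
  have h2 : s18lam w (-n) = s18lam w (-1 - n) * s18u w (-n) := by
    have := s18lam_step w (-n); rwa [show (-n - 1 : ℤ) = -1 - n by ring] at this
  rw [show (-1 - (n - 1) : ℤ) = -n by ring, h1, h2]
  simp only [map_mul, Complex.conj_conj]
  have hk := s18key_u w hsymm n
  linear_combination (s18lam w (n - 1) * (starRingEnd ℂ) (s18lam w (-1 - n))) * hk

noncomputable abbrev s18H := lp (fun _ : ℤ => ℂ) 2

lemma s18mem (w : ℤ → ℂ) (x : s18H) :
    Memℓp (fun n : ℤ => s18nu w n * x (-1 - n)) 2 := by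
  apply memℓp_gen
  have hs : Summable fun n : ℤ => ‖x n‖ ^ (2 : ℝ≥0∞).toReal :=
    (lp.memℓp x).summable (by norm_num)
  have hs2 := ((Equiv.subLeft (-1 : ℤ)).summable_iff
    (f := fun n : ℤ => ‖x n‖ ^ (2 : ℝ≥0∞).toReal)).mpr hs
  refine hs2.congr fun n => ?_
  simp only [Function.comp, Equiv.subLeft_apply]
  rw [norm_mul, s18nu_norm, one_mul]

noncomputable def s18K (w : ℤ → ℂ) : s18H →ₗ[ℂ] s18H where
  toFun x := ⟨fun n => s18nu w n * x (-1 - n), s18mem w x⟩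
  map_add' x y := by
    apply lp.ext
    funext n
    simp only [lp.coeFn_add, Pi.add_apply]
    change s18nu w n * (x + y) (-1 - n) = _
    rw [lp.coeFn_add]
    simp [mul_add]
  map_smul' c x := by
    apply lp.ext
    funext n
    change s18nu w n * (c • x) (-1 - n) = _
    rw [lp.coeFn_smul]
    simp only [Pi.smul_apply, smul_eq_mul, RingHom.id_apply]
    change _ = c * (s18nu w n * x (-1 - n))
    ring

lemma s18K_apply (w : ℤ → ℂ) (x : s18H) (n : ℤ) :
    (s18K w x) n = s18nu w n * x (-1 - n) := rfl

section
variable (w : ℤ → ℂ) (hsymm : ∀ n : ℤ, ‖w n‖ = ‖w (-n)‖)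
  (T : s18H →L[ℂ] s18H) (hT : ∀ (x : s18H) (n : ℤ), (T x) n = w (n + 1) * x (n + 1))

include hsymm hT

lemma s18shift (y z : s18H) : ⟪s18K w (T y), z⟫_ℂ = ⟪s18K w y, T z⟫_ℂ := by
  rw [lp.inner_eq_tsum, lp.inner_eq_tsum]
  conv_rhs => rw [← (Equiv.subRight (1 : ℤ)).tsum_eq]
  refine tsum_congr fun n => ?_
  simp only [Equiv.subRight_apply, RCLike.inner_apply, s18K_apply, hT,
    show (-1 - n + 1 : ℤ) = -n by ring, show (n - 1 + 1 : ℤ) = n by ring,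
    show (-1 - (n - 1) : ℤ) = -n by ring, map_mul]
  have hk := s18key w hsymm n
  linear_combination (-((starRingEnd ℂ) (y (-n)) * z n)) * hk

omit hsymm hT in
lemma s18herm (y z : s18H) :
    (starRingEnd ℂ) ⟪s18K w y, z⟫_ℂ = ⟪s18K w z, y⟫_ℂ := by
  rw [lp.inner_eq_tsum, lp.inner_eq_tsum, starRingEnd_apply, tsum_star]
  conv_rhs => rw [← (Equiv.subLeft (-1 : ℤ)).tsum_eq]
  refine tsum_congr fun n => ?_
  simp only [Equiv.subLeft_apply, RCLike.inner_apply, s18K_apply,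
    show (-1 - (-1 - n) : ℤ) = n by ring, s18nu_symm, map_mul, Complex.conj_conj,
    star_mul', starRingEnd_apply, star_star]
  ring

lemma s18pow (k : ℕ) (y z : s18H) :
    ⟪s18K w ((T ^ k) y), z⟫_ℂ = ⟪s18K w y, (T ^ k) z⟫_ℂ := by
  induction k generalizing y z with
  | zero => simp
  | succ k ih =>
      have hc : T ((T ^ k) z) = (T ^ k) (T z) := by
        rw [← ContinuousLinearMap.mul_apply, ← ContinuousLinearMap.mul_apply,
          ((Commute.refl T).pow_right k).eq]
      rw [pow_succ]
      simp only [ContinuousLinearMap.mul_apply]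
      rw [ih (T y) z, s18shift w hsymm T hT, hc]

lemma s18poly (p : Polynomial ℝ) (y z : s18H) :
    ⟪s18K w ((Polynomial.aeval T (p.map (algebraMap ℝ ℂ))) y), z⟫_ℂ
      = ⟪s18K w y, (Polynomial.aeval T (p.map (algebraMap ℝ ℂ))) z⟫_ℂ := by
  set q := p.map (algebraMap ℝ ℂ) with hq
  have hco : ∀ i, (starRingEnd ℂ) (q.coeff i) = q.coeff i := by
    intro i
    rw [hq, Polynomial.coeff_map]
    exact Complex.conj_ofReal _
  rw [Polynomial.aeval_eq_sum_range (R := ℂ) (x := T)]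
  simp only [ContinuousLinearMap.coe_sum', Finset.sum_apply,
    ContinuousLinearMap.coe_smul', Pi.smul_apply, map_sum, map_smul, sum_inner,
    inner_sum, inner_smul_left, inner_smul_right, smul_eq_mul]
  refine Finset.sum_congr rfl fun i _ => ?_
  rw [hco, s18pow w hsymm T hT]

lemma s18polypow (p : Polynomial ℝ) (k : ℕ) (y z : s18H) :
    ⟪s18K w (((Polynomial.aeval T (p.map (algebraMap ℝ ℂ))) ^ k) y), z⟫_ℂ
      = ⟪s18K w y, ((Polynomial.aeval T (p.map (algebraMap ℝ ℂ))) ^ k) z⟫_ℂ := by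
  induction k generalizing y z with
  | zero => simp
  | succ k ih =>
      set A := Polynomial.aeval T (p.map (algebraMap ℝ ℂ)) with hA
      have hc : A ((A ^ k) z) = (A ^ k) (A z) := by
        rw [← ContinuousLinearMap.mul_apply, ← ContinuousLinearMap.mul_apply,
          ((Commute.refl A).pow_right k).eq]
      rw [pow_succ]
      simp only [ContinuousLinearMap.mul_apply]
      rw [ih (A y) z, s18poly w hsymm T hT, hc]

end

/-- Let `w ∈ ℓ∞(ℤ)` be a weight sequence with `|w_n| = |w_{-n}|` for all `n`, `T_w` the
bilateral weighted shift on complex `ℓ₂(ℤ)` (`T_w e_n = w_n e_{n-1}`, equivalently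
`(T_w x)(n) = w_{n+1} x_{n+1}`), and `p` a polynomial with real coefficients. Then
`p(T_w)` is not `ℝ`-cyclic: no vector has orbit under `p(T_w)` with dense real-linear
span. -/
theorem stmt_18 (w : ℤ → ℂ) (hw : ∃ C : ℝ, ∀ n : ℤ, ‖w n‖ ≤ C)
    (hsymm : ∀ n : ℤ, ‖w n‖ = ‖w (-n)‖)
    (T : lp (fun _ : ℤ => ℂ) 2 →L[ℂ] lp (fun _ : ℤ => ℂ) 2)
    (hT : ∀ (x : lp (fun _ : ℤ => ℂ) 2) (n : ℤ), (T x) n = w (n + 1) * x (n + 1))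
    (p : Polynomial ℝ) :
    ¬ ∃ x : lp (fun _ : ℤ => ℂ) 2,
      Dense ((Submodule.span ℝ
        {y : lp (fun _ : ℤ => ℂ) 2 | ∃ n : ℕ,
          y = ((Polynomial.aeval T (p.map (algebraMap ℝ ℂ))) ^ n) x} :
            Submodule ℝ (lp (fun _ : ℤ => ℂ) 2)) : Set (lp (fun _ : ℤ => ℂ) 2)) := by
  rintro ⟨x, hdense⟩
  set A : s18H →L[ℂ] s18H := Polynomial.aeval T (p.map (algebraMap ℝ ℂ)) with hA
  set u : s18H := s18K w x with hu
  set F : s18H →L[ℝ] ℝ :=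
    Complex.imCLM.comp ((innerSL ℂ u).restrictScalars ℝ) with hF
  have hFapp : ∀ v : s18H, F v = (⟪u, v⟫_ℂ).im := fun v => rfl
  -- F vanishes on the orbit
  have hgen : ∀ y ∈ {y : s18H | ∃ n : ℕ, y = (A ^ n) x}, F y = 0 := by
    rintro y ⟨n, rfl⟩
    rw [hFapp]
    have h1 : (starRingEnd ℂ) ⟪u, (A ^ n) x⟫_ℂ = ⟪u, (A ^ n) x⟫_ℂ := by
      rw [hu, s18herm w x ((A ^ n) x), hA, s18polypow w hsymm T hT p n x x]
    rw [← Complex.conj_eq_iff_im]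
    exact h1
  -- hence on the closure of the span
  have hall : ∀ v : s18H, F v = 0 := by
    have hsub : (Submodule.span ℝ {y : s18H | ∃ n : ℕ, y = (A ^ n) x} :
        Set s18H) ⊆ {v : s18H | F v = 0} := by
      intro v hv
      have : v ∈ LinearMap.ker (F.toLinearMap) := by
        have hle : Submodule.span ℝ {y : s18H | ∃ n : ℕ, y = (A ^ n) x}
            ≤ LinearMap.ker (F.toLinearMap) := by
          rw [Submodule.span_le]
          intro y hy
          simpa [LinearMap.mem_ker] using hgen y hy
        exact hle hv
      simpa [LinearMap.mem_ker] using this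
    have hclosed : IsClosed {v : s18H | F v = 0} :=
      isClosed_eq F.continuous continuous_const
    intro v
    have := closure_minimal hsub hclosed
    rw [hdense.closure_eq] at this
    exact this (Set.mem_univ v)
  -- conclude u = 0
  have hu0 : u = 0 := by
    have h2 := hall (Complex.I • u)
    rw [hFapp, inner_smul_right] at h2
    have h3 : ⟪u, u⟫_ℂ = ((‖u‖ : ℝ) : ℂ) ^ 2 := inner_self_eq_norm_sq_to_K u
    rw [h3] at h2
    have h4 : ((‖u‖ : ℂ) ^ 2).re = 0 := by
      simpa [Complex.mul_im, Complex.I_re, Complex.I_im] using h2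
    rw [← Complex.ofReal_pow, Complex.ofReal_re] at h4
    have h5 : ‖u‖ = 0 := pow_eq_zero_iff (n := 2) (by norm_num) |>.mp h4
    exact norm_eq_zero.mp h5
  -- hence x = 0
  have hx0 : x = 0 := by
    apply lp.ext
    funext m
    have hcoord : (s18K w x) (-1 - m) = 0 := by
      rw [show s18K w x = u from hu.symm, hu0]
      simp
    rw [s18K_apply] at hcoord
    have : x (-1 - (-1 - m)) = 0 :=
      (mul_eq_zero.mp hcoord).resolve_left (s18nu_ne w (-1 - m))
    simpa [show (-1 - (-1 - m) : ℤ) = m by ring] using this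
  -- contradiction: the span of the orbit of 0 is not dense
  rw [hx0] at hdense
  have hset : {y : s18H | ∃ n : ℕ, y = (A ^ n) (0 : s18H)} = {(0 : s18H)} := by
    ext y
    simp [map_zero]
  rw [hset] at hdense
  have : (Submodule.span ℝ ({(0 : s18H)} : Set s18H) : Set s18H) = {(0 : s18H)} := by
    rw [Submodule.span_zero_singleton]
    rfl
  rw [this] at hdense
  have h1 : (lp.single 2 (0 : ℤ) (1 : ℂ) : s18H) ∈ closure ({(0 : s18H)} : Set s18H) :=
    hdense.closure_eq ▸ Set.mem_univ _
  rw [isClosed_singleton.closure_eq] at h1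
  have h2 : (lp.single 2 (0 : ℤ) (1 : ℂ) : s18H) (0 : ℤ) = 1 :=
    lp.single_apply_self 2 0 1
  rw [h1] at h2
  simp [lp.coeFn_zero] at h2
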